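/- For every set of formulas Γ and every formula A, if CL + Γ ⊢ A then ML + G(Γ) ⊢ G(A), where G(Γ) = {G(B) : B ∈ Γ} (soundness theorem of the Gödel–Gentzen translation into minimal logic). -/

import Mathlib

/-- Formulas of pure first-order predicate logic (de Bruijn indices;
terms are just variables, atoms are predicate symbols applied to variables). -/
inductive Formula : Type
  | bot : Formula
  | atom : ℕ → List ℕ → Formula
  | and : Formula → Formula → Formula
  | or : Formula → Formula → Formula
  | imp : Formula → Formula → Formula
  | all : Formula → Formula
  | ex : Formula → Formula

namespace Formula

def neg (A : Formula) : Formula := A.imp bot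
def iff (A B : Formula) : Formula := (A.imp B).and (B.imp A)

/-- Lift (shift by one) the free variables ≥ c. -/
def liftVar (c v : ℕ) : ℕ := if v < c then v else v + 1

def lift : ℕ → Formula → Formula
  | _, bot => bot
  | c, atom p ts => atom p (ts.map (liftVar c))
  | c, and A B => and (lift c A) (lift c B)
  | c, or A B => or (lift c A) (lift c B)
  | c, imp A B => imp (lift c A) (lift c B)
  | c, all A => all (lift (c+1) A)
  | c, ex A => ex (lift (c+1) A)

/-- Substitute the term (variable) `t` for the bound variable at depth `c`. -/
def substVar (c t v : ℕ) : ℕ := if v < c then v else if v = c then t + c else v - 1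

def subst : ℕ → ℕ → Formula → Formula
  | _, _, bot => bot
  | c, t, atom p ts => atom p (ts.map (substVar c t))
  | c, t, and A B => and (subst c t A) (subst c t B)
  | c, t, or A B => or (subst c t A) (subst c t B)
  | c, t, imp A B => imp (subst c t A) (subst c t B)
  | c, t, all A => all (subst (c+1) t A)
  | c, t, ex A => ex (subst (c+1) t A)

end Formula

/-- The three flavours of logic: minimal, intuitionistic, classical. -/
inductive Flavour : Type
  | min | int | cl
  deriving DecidableEq

/-- Natural deduction. `Prf f Γ A`: A is derivable from hypotheses Γ in
minimal/intuitionistic/classical first-order logic according to `f`. -/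
inductive Prf : Flavour → Set Formula → Formula → Prop
  | hyp {f : Flavour} {Γ : Set Formula} {A : Formula} : A ∈ Γ → Prf f Γ A
  | andI {f : Flavour} {Γ : Set Formula} {A B : Formula} : Prf f Γ A → Prf f Γ B → Prf f Γ (A.and B)
  | andE1 {f : Flavour} {Γ : Set Formula} {A B : Formula} : Prf f Γ (A.and B) → Prf f Γ A
  | andE2 {f : Flavour} {Γ : Set Formula} {A B : Formula} : Prf f Γ (A.and B) → Prf f Γ B
  | orI1 {f : Flavour} {Γ : Set Formula} {A B : Formula} : Prf f Γ A → Prf f Γ (A.or B)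
  | orI2 {f : Flavour} {Γ : Set Formula} {A B : Formula} : Prf f Γ B → Prf f Γ (A.or B)
  | orE {f : Flavour} {Γ : Set Formula} {A B C : Formula} : Prf f Γ (A.or B) → Prf f (insert A Γ) C →
      Prf f (insert B Γ) C → Prf f Γ C
  | impI {f : Flavour} {Γ : Set Formula} {A B : Formula} : Prf f (insert A Γ) B → Prf f Γ (A.imp B)
  | impE {f : Flavour} {Γ : Set Formula} {A B : Formula} : Prf f Γ (A.imp B) → Prf f Γ A → Prf f Γ B
  | allI {f : Flavour} {Γ : Set Formula} {A : Formula} : Prf f (Formula.lift 0 '' Γ) A → Prf f Γ (Formula.all A)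
  | allE {f : Flavour} {Γ : Set Formula} {A : Formula} (t : ℕ) : Prf f Γ (Formula.all A) → Prf f Γ (A.subst 0 t)
  | exI {f : Flavour} {Γ : Set Formula} {A : Formula} (t : ℕ) : Prf f Γ (A.subst 0 t) → Prf f Γ (Formula.ex A)
  | exE {f : Flavour} {Γ : Set Formula} {A B : Formula} : Prf f Γ (Formula.ex A) →
      Prf f (insert A (Formula.lift 0 '' Γ)) (B.lift 0) → Prf f Γ B
  | exfalso {f : Flavour} {Γ : Set Formula} {A : Formula} : f ≠ Flavour.min → Prf f Γ Formula.bot → Prf f Γ A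
  | dne {f : Flavour} {Γ : Set Formula} {A : Formula} : f = Flavour.cl → Prf f Γ A.neg.neg → Prf f Γ A

/-- The Gödel–Gentzen negative translation. -/
def G : Formula → Formula
  | .bot => .bot
  | .atom p ts => (Formula.atom p ts).neg.neg
  | .and A B => (G A).and (G B)
  | .or A B => ((G A).neg.and (G B).neg).neg
  | .imp A B => (G A).imp (G B)
  | .all A => .all (G A)
  | .ex A => (Formula.all (G A).neg).neg

/-- The negative fragment: ⊥, negated atoms, closed under ∧, →, ∀. -/
inductive NF : Formula → Prop
  | bot : NF Formula.bot
  | negAtom (p : ℕ) (ts : List ℕ) : NF (Formula.atom p ts).neg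
  | and {A B} : NF A → NF B → NF (A.and B)
  | imp {A B} : NF A → NF B → NF (A.imp B)
  | all {A} : NF A → NF (Formula.all A)

section Aux

open Formula Set

/-- Weakening. -/
lemma Prf.weaken {f : Flavour} {Γ : Set Formula} {A : Formula} (h : Prf f Γ A) :
    ∀ {Δ : Set Formula}, Γ ⊆ Δ → Prf f Δ A := by
  induction h with
  | hyp hA => exact fun hs => .hyp (hs hA)
  | andI _ _ ih1 ih2 => exact fun hs => .andI (ih1 hs) (ih2 hs)
  | andE1 _ ih => exact fun hs => .andE1 (ih hs)
  | andE2 _ ih => exact fun hs => .andE2 (ih hs)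
  | orI1 _ ih => exact fun hs => .orI1 (ih hs)
  | orI2 _ ih => exact fun hs => .orI2 (ih hs)
  | orE _ _ _ ih ih1 ih2 =>
      exact fun hs => .orE (ih hs) (ih1 (Set.insert_subset_insert hs))
        (ih2 (Set.insert_subset_insert hs))
  | impI _ ih => exact fun hs => .impI (ih (Set.insert_subset_insert hs))
  | impE _ _ ih1 ih2 => exact fun hs => .impE (ih1 hs) (ih2 hs)
  | allI _ ih => exact fun hs => .allI (ih (Set.image_mono hs))
  | allE t _ ih => exact fun hs => .allE t (ih hs)
  | exI t _ ih => exact fun hs => .exI t (ih hs)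
  | exE _ _ ih ih2 =>
      exact fun hs => .exE (ih hs)
        (ih2 (Set.insert_subset_insert (Set.image_mono hs)))
  | exfalso hf _ ih => exact fun hs => .exfalso hf (ih hs)
  | dne hf _ ih => exact fun hs => .dne hf (ih hs)

lemma Prf.weaken1 {f : Flavour} {Γ : Set Formula} {A B : Formula} (h : Prf f Γ A) :
    Prf f (insert B Γ) A := h.weaken (Set.subset_insert _ _)

lemma Prf.hyp0 {f : Flavour} {Γ : Set Formula} {A : Formula} : Prf f (insert A Γ) A :=
  .hyp (Set.mem_insert _ _)

lemma Prf.hyp1 {f : Flavour} {Γ : Set Formula} {A B : Formula} :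
    Prf f (insert B (insert A Γ)) A :=
  .hyp (Set.mem_insert_of_mem _ (Set.mem_insert _ _))

lemma G_lift (A : Formula) : ∀ c, G (A.lift c) = (G A).lift c := by
  induction A with
  | bot => intro c; rfl
  | atom p ts => intro c; rfl
  | and A B ihA ihB => intro c; simp [Formula.lift, G, ihA, ihB]
  | or A B ihA ihB => intro c; simp [Formula.lift, G, Formula.neg, ihA, ihB]
  | imp A B ihA ihB => intro c; simp [Formula.lift, G, ihA, ihB]
  | all A ihA => intro c; simp [Formula.lift, G, ihA]
  | ex A ihA => intro c; simp [Formula.lift, G, Formula.neg, ihA]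

lemma G_subst (A : Formula) : ∀ c t, G (A.subst c t) = (G A).subst c t := by
  induction A with
  | bot => intro c t; rfl
  | atom p ts => intro c t; rfl
  | and A B ihA ihB => intro c t; simp [Formula.subst, G, ihA, ihB]
  | or A B ihA ihB => intro c t; simp [Formula.subst, G, Formula.neg, ihA, ihB]
  | imp A B ihA ihB => intro c t; simp [Formula.subst, G, ihA, ihB]
  | all A ihA => intro c t; simp [Formula.subst, G, ihA]
  | ex A ihA => intro c t; simp [Formula.subst, G, Formula.neg, ihA]

lemma subst_lift (A : Formula) : ∀ c, (A.lift (c+1)).subst c 0 = A := by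
  induction A with
  | bot => intro c; rfl
  | atom p ts =>
      intro c
      simp only [Formula.lift, Formula.subst, List.map_map]
      have hv : ∀ v, Formula.substVar c 0 (Formula.liftVar (c+1) v) = v := by
        intro v
        simp only [Formula.substVar, Formula.liftVar]
        split_ifs <;> omega
      rw [show (Formula.substVar c 0 ∘ Formula.liftVar (c+1)) = id from funext hv,
        List.map_id]
  | and A B ihA ihB => intro c; simp [Formula.lift, Formula.subst, ihA, ihB]
  | or A B ihA ihB => intro c; simp [Formula.lift, Formula.subst, ihA, ihB]
  | imp A B ihA ihB => intro c; simp [Formula.lift, Formula.subst, ihA, ihB]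
  | all A ihA => intro c; simp [Formula.lift, Formula.subst, ihA]
  | ex A ihA => intro c; simp [Formula.lift, Formula.subst, ihA]

lemma NF_G (A : Formula) : NF (G A) := by
  induction A with
  | bot => exact .bot
  | atom p ts => exact .imp (.negAtom p ts) .bot
  | and A B ihA ihB => exact .and ihA ihB
  | or A B ihA ihB => exact .imp (.and (.imp ihA .bot) (.imp ihB .bot)) .bot
  | imp A B ihA ihB => exact .imp ihA ihB
  | all A ihA => exact .all ihA
  | ex A ihA => exact .imp (.all (.imp ihA .bot)) .bot

/-- Stability of negative formulas in minimal logic. -/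
lemma nf_stable {A : Formula} (h : NF A) :
    ∀ Γ : Set Formula, Prf Flavour.min Γ (A.neg.neg.imp A) := by
  induction h with
  | bot =>
      intro Γ
      exact .impI (.impE .hyp0 (.impI .hyp0))
  | negAtom p ts =>
      intro Γ
      exact .impI (.impI (.impE .hyp1 (.impI (.impE .hyp0 .hyp1))))
  | and hA hB ihA ihB =>
      intro Γ
      refine .impI (.andI ?_ ?_)
      · refine .impE (ihA _).weaken1 (.impI (.impE .hyp1 (.impI (.impE .hyp1 (.andE1 .hyp0)))))
      · refine .impE (ihB _).weaken1 (.impI (.impE .hyp1 (.impI (.impE .hyp1 (.andE2 .hyp0)))))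
  | imp hA hB ihA ihB =>
      intro Γ
      refine .impI (.impI ?_)
      refine .impE ((ihB _).weaken1.weaken1) ?_
      refine .impI (.impE (Prf.weaken1 .hyp1) (.impI (.impE .hyp1 (.impE .hyp0 (Prf.weaken1 .hyp1)))))
  | @all A hA ihA =>
      intro Γ
      refine .impI (.allI ?_)
      rw [Set.image_insert_eq]
      show Prf Flavour.min
        (insert ((Formula.all A).neg.neg.lift 0) (Formula.lift 0 '' Γ)) A
      have hl : (Formula.all A).neg.neg.lift 0
          = (Formula.all (A.lift 1)).neg.neg := by
        simp [Formula.neg, Formula.lift]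
      rw [hl]
      refine .impE (ihA _) ?_
      refine .impI (.impE .hyp1 (.impI ?_))
      have := Prf.allE (f := Flavour.min)
        (Γ := insert (Formula.all (A.lift 1))
          (insert A.neg (insert (Formula.all (A.lift 1)).neg.neg (Formula.lift 0 '' Γ))))
        (A := A.lift 1) 0 .hyp0
      rw [subst_lift A 0] at this
      exact .impE .hyp1 this

lemma Prf.stable {Γ : Set Formula} {A : Formula} (h : Prf Flavour.min Γ (G A).neg.neg) :
    Prf Flavour.min Γ (G A) :=
  .impE (nf_stable (NF_G A) Γ) h

lemma G_image_lift (Γ : Set Formula) :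
    G '' (Formula.lift 0 '' Γ) = Formula.lift 0 '' (G '' Γ) := by
  simp [Set.image_image, G_lift]

end Aux

/-- Soundness of the Gödel–Gentzen translation into minimal logic:
if CL + Γ ⊢ A then ML + G(Γ) ⊢ G(A). -/
theorem G_soundness (Γ : Set Formula) (A : Formula) (h : Prf Flavour.cl Γ A) :
    Prf Flavour.min (G '' Γ) (G A) := by
  induction h with
  | hyp hA => exact .hyp (Set.mem_image_of_mem _ hA)
  | andI _ _ ih1 ih2 => exact .andI ih1 ih2
  | andE1 _ ih => exact .andE1 ih
  | andE2 _ ih => exact .andE2 ih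
  | orI1 _ ih =>
      exact .impI (.impE (.andE1 .hyp0) ih.weaken1)
  | orI2 _ ih =>
      exact .impI (.impE (.andE2 .hyp0) ih.weaken1)
  | @orE _ A B C _ _ _ ih ih1 ih2 =>
      rw [Set.image_insert_eq] at ih1 ih2
      refine Prf.stable (.impI (.impE ih.weaken1 (.andI ?_ ?_)))
      · refine .impI (.impE .hyp1 ?_)
        exact ih1.weaken (Set.insert_subset_insert (Set.subset_insert _ _))
      · refine .impI (.impE .hyp1 ?_)
        exact ih2.weaken (Set.insert_subset_insert (Set.subset_insert _ _))
  | impI _ ih =>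
      rw [Set.image_insert_eq] at ih
      exact .impI ih
  | impE _ _ ih1 ih2 => exact .impE ih1 ih2
  | allI _ ih =>
      rw [G_image_lift] at ih
      exact .allI ih
  | @allE _ A t _ ih =>
      rw [G_subst]
      exact .allE t ih
  | @exI Γ2 A t _ ih =>
      rw [G_subst] at ih
      refine .impI (.impE ?_ ih.weaken1)
      have := Prf.allE (f := Flavour.min)
        (Γ := insert (Formula.all (G A).neg) (G '' Γ2)) (A := (G A).neg) t .hyp0
      simpa [Formula.neg, Formula.subst] using this
  | @exE _ A B _ _ ih ih2 =>
      rw [Set.image_insert_eq, G_image_lift, G_lift] at ih2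
      refine Prf.stable (.impI (.impE ih.weaken1 (.allI ?_)))
      rw [Set.image_insert_eq]
      have hl : (G B).neg.lift 0 = ((G B).lift 0).neg := by
        simp [Formula.neg, Formula.lift]
      rw [hl]
      refine .impI (.impE .hyp1 ?_)
      exact ih2.weaken (Set.insert_subset_insert (Set.subset_insert _ _))
  | exfalso _ _ ih =>
      exact Prf.stable (.impI ih.weaken1)
  | dne _ _ ih =>
      exact Prf.stable ih
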